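/- For any distributed Petri net N there is an LSGA net N′ such that N′ and N are branching ST-bisimilar with explicit divergence (N′ ≈Δ_bSTb N). -/

import Mathlib

open scoped Classical

/-- A labelled Petri net over the set `A` of visible actions (a transition labelled
`none` is a τ-(internal) transition), with places drawn from the universe `P` and
transitions drawn from the universe `Tr`.  `pre t p` is the arc weight `F(p,t)` and
`post t p` is the arc weight `F(t,p)`. -/
structure PNet (P Tr A : Type) where
  places : Set P
  trans : Set Tr
  pre : Tr → P → ℕ
  post : Tr → P → ℕ
  M0 : P → ℕ
  l : Tr → Option A
  pre_wf : ∀ t p, pre t p ≠ 0 → t ∈ trans ∧ p ∈ places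
  post_wf : ∀ t p, post t p ≠ 0 → t ∈ trans ∧ p ∈ places
  M0_wf : ∀ p, M0 p ≠ 0 → p ∈ places

namespace PNet

variable {P Tr A : Type}

/-- `•G`, for a finite multiset `G` of transitions. -/
def preStep (N : PNet P Tr A) (G : Tr →₀ ℕ) : P → ℕ :=
  fun p => G.sum fun t n => n * N.pre t p

/-- `G•`, for a finite multiset `G` of transitions. -/
def postStep (N : PNet P Tr A) (G : Tr →₀ ℕ) : P → ℕ :=
  fun p => G.sum fun t n => n * N.post t p

/-- `M [G⟩ M'` : the (nonempty, finite) multiset `G` of transitions is a step from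
`M` to `M'`. -/
def IsStep (N : PNet P Tr A) (M : P → ℕ) (G : Tr →₀ ℕ) (M' : P → ℕ) : Prop :=
  G ≠ 0 ∧ ↑G.support ⊆ N.trans ∧ (∀ p, N.preStep G p ≤ M p) ∧
    ∀ p, M' p = M p - N.preStep G p + N.postStep G p

/-- `[M0⟩` : the set of reachable markings. -/
inductive Reachable (N : PNet P Tr A) : (P → ℕ) → Prop
  | refl : Reachable N N.M0
  | step {M G M'} : Reachable N M → N.IsStep M G M' → Reachable N M'

/-- The transition `t` is enabled under the marking `M`. -/
def enabled (N : PNet P Tr A) (M : P → ℕ) (t : Tr) : Prop :=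
  t ∈ N.trans ∧ ∀ p, N.pre t p ≤ M p

/-- The concurrency relation `t ⌣ u`. -/
def Conc (N : PNet P Tr A) (t u : Tr) : Prop :=
  t ∈ N.trans ∧ u ∈ N.trans ∧ ∃ M, N.Reachable M ∧ ∀ p, N.pre t p + N.pre u p ≤ M p

/-- Firing of a single transition: `M [\{t\}⟩ M'`. -/
def fire (N : PNet P Tr A) (M : P → ℕ) (t : Tr) (M' : P → ℕ) : Prop :=
  N.enabled M t ∧ ∀ p, M' p = M p - N.pre t p + N.post t p

/-- `M —τ→ M'`. -/
def tauFire (N : PNet P Tr A) (M M' : P → ℕ) : Prop :=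
  ∃ t, N.l t = none ∧ N.fire M t M'

/-- `M —a→ M'` for a visible action `a`. -/
def visFire (N : PNet P Tr A) (a : A) (M M' : P → ℕ) : Prop :=
  ∃ t, N.l t = some a ∧ N.fire M t M'

/-- `M ⟹ M'` : the reflexive-transitive closure of `—τ→`. -/
def Taus (N : PNet P Tr A) : (P → ℕ) → (P → ℕ) → Prop :=
  Relation.ReflTransGen N.tauFire

/-- `M ⟹σ⟹ M'` for a sequence `σ` of visible actions. -/
def seqReach (N : PNet P Tr A) : List A → (P → ℕ) → (P → ℕ) → Prop
  | [], M, M' => N.Taus M M'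
  | a :: σ, M, M'' => ∃ M1 M2, N.Taus M M1 ∧ N.visFire a M1 M2 ∧ N.seqReach σ M2 M''

/-- `ℓ(G)(a)` : the number of occurrences of the visible action `a` in the finite
multiset `G` of transitions. -/
noncomputable def labCount (N : PNet P Tr A) (G : Tr →₀ ℕ) (a : A) : ℕ :=
  ∑ t ∈ G.support, if N.l t = some a then G t else 0

/-- `ℓ(G)(a)` for a finite signed multiset `G` of transitions. -/
noncomputable def labCountZ (N : PNet P Tr A) (G : Tr →₀ ℤ) (a : A) : ℤ :=
  ∑ t ∈ G.support, if N.l t = some a then G t else 0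

/-- `ℓ(G) ≡ ∅` : the signed multiset `G` contains no visible actions. -/
def SilentZ (N : PNet P Tr A) (G : Tr →₀ ℤ) : Prop := ∀ a, N.labCountZ G a = 0

/-- The token replacement `⟦G⟧ = G• − •G` of a finite signed multiset of transitions. -/
noncomputable def tok (N : PNet P Tr A) (G : Tr →₀ ℤ) : P → ℤ :=
  fun p => ∑ t ∈ G.support, G t * ((N.post t p : ℤ) - (N.pre t p : ℤ))

/-- The token replacement `⟦G⟧ = G• − •G` of a finite multiset of transitions. -/
noncomputable def tokN (N : PNet P Tr A) (G : Tr →₀ ℕ) : P → ℤ :=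
  fun p => ∑ t ∈ G.support, (G t : ℤ) * ((N.post t p : ℤ) - (N.pre t p : ℤ))

/-- `M —X→` : a step with multiset of visible labels `X ∈ ℕ^Act` is enabled in `M`. -/
def stepTo (N : PNet P Tr A) (M : P → ℕ) (X : A → ℕ) : Prop :=
  ∃ G : Tr →₀ ℕ, G ≠ 0 ∧ ↑G.support ⊆ N.trans ∧ (∀ t ∈ G.support, N.l t ≠ none) ∧
    (∀ p, N.preStep G p ≤ M p) ∧ ∀ a, N.labCount G a = X a

/-- `⟨σ, X⟩` is a step ready pair of `N`. -/
def StepReadyPair (N : PNet P Tr A) (σ : List A) (X : Set (A → ℕ)) : Prop :=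
  ∃ M, N.seqReach σ N.M0 M ∧ (∀ M', ¬ N.tauFire M M') ∧ X = {Y | N.stepTo M Y}

/-- A net is plain iff its labelling is injective and no transition is labelled τ. -/
def Plain (N : PNet P Tr A) : Prop :=
  (∀ t ∈ N.trans, N.l t ≠ none) ∧
    ∀ t ∈ N.trans, ∀ u ∈ N.trans, N.l t = N.l u → t = u

/-- A structural conflict net: concurrent transitions have no common preplace. -/
def StructuralConflict (N : PNet P Tr A) : Prop :=
  ∀ t u, N.Conc t u → ∀ p, N.pre t p = 0 ∨ N.pre u p = 0

/-- A finitary net: every transition has a preplace, and every reachable marking is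
finite and enables only finitely many transitions. -/
def Finitary (N : PNet P Tr A) : Prop :=
  (∀ t ∈ N.trans, ∃ p, N.pre t p ≠ 0) ∧
    ∀ M, N.Reachable M → {p | M p ≠ 0}.Finite ∧ {t | N.enabled M t}.Finite

/-- `N` has a fully reachable pure M. -/
def FullyReachablePureM (N : PNet P Tr A) : Prop :=
  ∃ t u v : Tr, t ∈ N.trans ∧ u ∈ N.trans ∧ v ∈ N.trans ∧
    (∃ p, N.pre t p ≠ 0 ∧ N.pre u p ≠ 0) ∧
    (∃ p, N.pre u p ≠ 0 ∧ N.pre v p ≠ 0) ∧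
    (∀ p, N.pre t p = 0 ∨ N.pre v p = 0) ∧
    ∃ M, N.Reachable M ∧ ∀ p, max (max (N.pre t p) (N.pre u p)) (N.pre v p) ≤ M p

/-- `N` is distributed w.r.t. the distribution `D`. -/
def DistributedWrt (N : PNet P Tr A) {Loc : Type} (D : P ⊕ Tr → Loc) : Prop :=
  (∀ t p, N.pre t p ≠ 0 → D (Sum.inr t) = D (Sum.inl p)) ∧
    ∀ t u, N.Conc t u → D (Sum.inr t) ≠ D (Sum.inr u)

/-- `N` is a distributed net. -/
def Distributed (N : PNet P Tr A) : Prop :=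
  ∃ (Loc : Type) (D : P ⊕ Tr → Loc), N.DistributedWrt D

/-- `N` is essentially distributed w.r.t. the distribution `D`. -/
def EssentiallyDistributedWrt (N : PNet P Tr A) {Loc : Type} (D : P ⊕ Tr → Loc) : Prop :=
  (∀ t p, N.pre t p ≠ 0 → D (Sum.inr t) = D (Sum.inl p)) ∧
    ∀ t u, N.Conc t u → N.l t ≠ none → D (Sum.inr t) ≠ D (Sum.inr u)

def EssentiallyDistributed (N : PNet P Tr A) : Prop :=
  ∃ (Loc : Type) (D : P ⊕ Tr → Loc), N.EssentiallyDistributedWrt D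

/-- `N` is externally distributed w.r.t. the distribution `D`. -/
def ExternallyDistributedWrt (N : PNet P Tr A) {Loc : Type} (D : P ⊕ Tr → Loc) : Prop :=
  (∀ t p, N.pre t p ≠ 0 → D (Sum.inr t) = D (Sum.inl p)) ∧
    ∀ t u, N.Conc t u → N.l t ≠ none → N.l u ≠ none → D (Sum.inr t) ≠ D (Sum.inr u)

def ExternallyDistributed (N : PNet P Tr A) : Prop :=
  ∃ (Loc : Type) (D : P ⊕ Tr → Loc), N.ExternallyDistributedWrt D

/-- The generating relation of the canonical co-location relation: a transition is
co-located with each of its preplaces. -/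
def canonGen (N : PNet P Tr A) : (P ⊕ Tr) → (P ⊕ Tr) → Prop :=
  fun x y => ∃ t p, x = Sum.inr t ∧ y = Sum.inl p ∧ N.pre t p ≠ 0

/-- The canonical co-location relation `≡_C`. -/
def canonRel (N : PNet P Tr A) : (P ⊕ Tr) → (P ⊕ Tr) → Prop :=
  Relation.EqvGen N.canonGen

/-- The canonical distribution, mapping every net element to its `≡_C`-class. -/
def canonDist (N : PNet P Tr A) : (P ⊕ Tr) → Quot N.canonRel := Quot.mk _

/-- The flow relation `F` on `S ∪ T`. -/
def flow (N : PNet P Tr A) : P ⊕ Tr → P ⊕ Tr → ℕ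
  | Sum.inl p, Sum.inr t => N.pre t p
  | Sum.inr t, Sum.inl p => N.post t p
  | _, _ => 0

/-- `F ↾ (S ∪ T⁺)` is acyclic. -/
def AcyclicOn (N : PNet P Tr A) (Tp : Set Tr) : Prop :=
  ∀ x : P ⊕ Tr, ¬ Relation.TransGen
    (fun x y => N.flow x y ≠ 0 ∧ (∀ t, x = Sum.inr t → t ∈ Tp) ∧
      (∀ t, y = Sum.inr t → t ∈ Tp)) x x

/-- A path in `N`, as a nonempty alternating list of net elements. -/
def IsPathList (N : PNet P Tr A) (π : List (P ⊕ Tr)) : Prop :=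
  π ≠ [] ∧ π.Chain' fun x y => N.flow x y ≠ 0

/-- The arc weight `F(π)` of a path `π`. -/
def pathWeight (N : PNet P Tr A) (π : List (P ⊕ Tr)) : ℕ :=
  ((π.zip π.tail).map fun q => N.flow q.1 q.2).prod

/-- A faithful place w.r.t. `T⁺` and `S⁺`, i.e. `|{s} ∩ S⁺| + ∑_{t ∈ T⁺} F(t,s) = 1`. -/
def FaithfulPlace (N : PNet P Tr A) (Tp : Set Tr) (Sp : Set P) (s : P) : Prop :=
  (s ∈ Sp ∧ ∀ t ∈ Tp, N.post t s = 0) ∨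
    (s ∉ Sp ∧ ∃ t ∈ Tp, N.post t s = 1 ∧ ∀ u ∈ Tp, u ≠ t → N.post u s = 0)

/-- A faithful path w.r.t. `T⁺` and `S⁺`: all nodes but the last are transitions
in `T⁺` or faithful places. -/
def FaithfulPath (N : PNet P Tr A) (Tp : Set Tr) (Sp : Set P) (π : List (P ⊕ Tr)) : Prop :=
  N.IsPathList π ∧ ∀ x ∈ π.dropLast,
    (∃ t ∈ Tp, x = Sum.inr t) ∨ ∃ s, x = Sum.inl s ∧ N.FaithfulPlace Tp Sp s

/-- The multiset `*x` of faithful origins of a net element `x`, w.r.t. `T⁺` and `S⁺`. -/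
noncomputable def faithOrig (N : PNet P Tr A) (Tp : Set Tr) (Sp : Set P) (x : P ⊕ Tr) :
    P → ℕ∞ :=
  fun s => sSup {w : ℕ∞ | ∃ π : List (P ⊕ Tr), s ∈ Sp ∧ N.FaithfulPath Tp Sp π ∧
    π.head? = some (Sum.inl s) ∧ π.getLast? = some x ∧ w = (N.pathWeight π : ℕ∞)}

end PNet

/-- A labelled transition system over visible labels `L` (the invisible action τ is
represented by `none`). -/
structure LTS (St L : Type) where
  init : St
  tr : St → Option L → St → Prop

namespace LTS

variable {St L : Type}

/-- `⟹` : the reflexive-transitive closure of `—τ→`. -/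
def Taus (Lt : LTS St L) : St → St → Prop :=
  Relation.ReflTransGen fun s s' => Lt.tr s none s'

/-- `s —(η)→ s'` : an `η`-transition that may stay put when `η = τ`. -/
def OptTr (Lt : LTS St L) (s : St) (η : Option L) (s' : St) : Prop :=
  Lt.tr s η s' ∨ (η = none ∧ s = s')

/-- The state `s` admits an infinite sequence of τ-transitions. -/
def Diverges (Lt : LTS St L) (s : St) : Prop :=
  ∃ f : ℕ → St, f 0 = s ∧ ∀ n, Lt.tr (f n) none (f (n + 1))

def ReachableState (Lt : LTS St L) (s : St) : Prop :=
  Relation.ReflTransGen (fun x y => ∃ η, Lt.tr x η y) Lt.init s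

/-- A deterministic LTS: no reachable state admits a τ-transition, and visible
transitions from reachable states are deterministic. -/
def Deterministic (Lt : LTS St L) : Prop :=
  ∀ s, Lt.ReachableState s →
    (∀ s', ¬ Lt.tr s none s') ∧
      ∀ a s' s'', Lt.tr s (some a) s' → Lt.tr s (some a) s'' → s' = s''

end LTS

/-- `B` is a branching bisimulation between the two LTSs. -/
def IsBranchingBisim {St1 St2 L : Type} (L1 : LTS St1 L) (L2 : LTS St2 L)
    (B : St1 → St2 → Prop) : Prop :=
  B L1.init L2.init ∧
    (∀ s1 s2 η s1', B s1 s2 → L1.tr s1 η s1' →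
      ∃ s2d s2', L2.Taus s2 s2d ∧ L2.OptTr s2d η s2' ∧ B s1 s2d ∧ B s1' s2') ∧
    ∀ s1 s2 η s2', B s1 s2 → L2.tr s2 η s2' →
      ∃ s1d s1', L1.Taus s1 s1d ∧ L1.OptTr s1d η s1' ∧ B s1d s2 ∧ B s1' s2'

/-- The two LTSs are branching bisimilar. -/
def BranchingBisimilar {St1 St2 L : Type} (L1 : LTS St1 L) (L2 : LTS St2 L) : Prop :=
  ∃ B, IsBranchingBisim L1 L2 B

/-- The two LTSs are branching bisimilar with explicit divergence. -/
def BranchingBisimilarED {St1 St2 L : Type} (L1 : LTS St1 L) (L2 : LTS St2 L) : Prop :=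
  ∃ B, IsBranchingBisim L1 L2 B ∧
    ∀ s1 s2, B s1 s2 → (L1.Diverges s1 ↔ L2.Diverges s2)

/-- The visible action phases `a⁺` and `a⁻ⁿ` (here `n` is the 0-based position of the
terminating transition in the sequence of transitions currently firing). -/
inductive STLabel (A : Type) : Type
  | plus (a : A)
  | minus (a : A) (n : ℕ)

/-- The visible action phases `a⁺` and `a⁻` of split semantics. -/
inductive SplitLabel (A : Type) : Type
  | plus (a : A)
  | minus (a : A)

/-- The map `η ↦ η‾` from ST-action phases to split action phases. -/
def STLabel.bar {A : Type} : STLabel A → SplitLabel A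
  | .plus a => .plus a
  | .minus a _ => .minus a

namespace PNet

variable {P Tr A : Type}

/-- The ST-transition relations between ST-markings. -/
def stTr (N : PNet P Tr A) :
    ((P → ℕ) × List Tr) → Option (STLabel A) → ((P → ℕ) × List Tr) → Prop
  | s, some (STLabel.plus a), s' => ∃ t, N.l t = some a ∧ N.enabled s.1 t ∧
      (∀ p, s'.1 p = s.1 p - N.pre t p) ∧ s'.2 = s.2 ++ [t]
  | s, some (STLabel.minus a n), s' => ∃ t, s.2[n]? = some t ∧ N.l t = some a ∧
      s'.2 = s.2.eraseIdx n ∧ ∀ p, s'.1 p = s.1 p + N.post t p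
  | s, none, s' => ∃ t, N.l t = none ∧ N.fire s.1 t s'.1 ∧ s'.2 = s.2

/-- The ST-LTS associated to a net. -/
def stLTS (N : PNet P Tr A) : LTS ((P → ℕ) × List Tr) (STLabel A) :=
  ⟨(N.M0, []), N.stTr⟩

/-- The split transition relations between split markings. -/
def splitTr (N : PNet P Tr A) :
    ((P → ℕ) × Multiset Tr) → Option (SplitLabel A) → ((P → ℕ) × Multiset Tr) → Prop
  | s, some (SplitLabel.plus a), s' => ∃ t, N.l t = some a ∧ N.enabled s.1 t ∧
      (∀ p, s'.1 p = s.1 p - N.pre t p) ∧ s'.2 = s.2 + {t}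
  | s, some (SplitLabel.minus a), s' => ∃ t, N.l t = some a ∧ s.2 = s'.2 + {t} ∧
      ∀ p, s'.1 p = s.1 p + N.post t p
  | s, none, s' => ∃ t, N.l t = none ∧ N.fire s.1 t s'.1 ∧ s'.2 = s.2

/-- The split LTS associated to a net. -/
def splitLTS (N : PNet P Tr A) : LTS ((P → ℕ) × Multiset Tr) (SplitLabel A) :=
  ⟨(N.M0, 0), N.splitTr⟩

end PNet

/-- `N1 ≈Δ_bSTb N2` : branching ST-bisimilarity with explicit divergence. -/
def BranchingSTBisimilarED {P1 T1 P2 T2 A : Type}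
    (N1 : PNet P1 T1 A) (N2 : PNet P2 T2 A) : Prop :=
  BranchingBisimilarED N1.stLTS N2.stLTS

/-- `N1 ≈R N2` : step readiness equivalence. -/
def StepReadinessEquiv {P1 T1 P2 T2 A : Type}
    (N1 : PNet P1 T1 A) (N2 : PNet P2 T2 A) : Prop :=
  ∀ σ X, N1.StepReadyPair σ X ↔ N2.StepReadyPair σ X

/-- A component with interface `(I, O)`. -/
structure NetComponent (P Tr A : Type) where
  net : PNet P Tr A
  I : Set P
  O : Set P
  I_sub : I ⊆ net.places
  O_sub : O ⊆ net.places
  disjIO : Disjoint I O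
  O_noPost : ∀ p ∈ O, ∀ t, net.pre t p = 0

/-- A sequential component with interface: some set `Q` of private places carries
exactly one token initially, and every transition consumes and produces exactly one
token in `Q`. -/
def NetComponent.Sequential {P Tr A : Type} (C : NetComponent P Tr A) : Prop :=
  ∃ Q : Set P, Q ⊆ C.net.places \ (C.I ∪ C.O) ∧
    (∀ t ∈ C.net.trans,
      (∃ q ∈ Q, C.net.pre t q = 1 ∧ ∀ q' ∈ Q, q' ≠ q → C.net.pre t q' = 0) ∧
        ∃ q ∈ Q, C.net.post t q = 1 ∧ ∀ q' ∈ Q, q' ≠ q → C.net.post t q' = 0) ∧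
    ∃ q ∈ Q, C.net.M0 q = 1 ∧ ∀ q' ∈ Q, q' ≠ q → C.net.M0 q' = 0

/-- The components of the family `C` are pairwise composable: disjoint except for
shared interface places, and with pairwise disjoint sets of input places. -/
def Composable {K P Tr A : Type} (C : K → NetComponent P Tr A) : Prop :=
  (∀ k l, k ≠ l → Disjoint (C k).net.trans (C l).net.trans) ∧
    (∀ k l, k ≠ l →
      (C k).net.places ∩ (C l).net.places =
        ((C k).I ∪ (C k).O) ∩ ((C l).I ∪ (C l).O)) ∧
    ∀ k l, k ≠ l → Disjoint (C k).I (C l).I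

/-- `D = ‖_{k ∈ K} C k` : `D` is the asynchronous parallel composition of the
family `C` of components. -/
structure IsParComp {K P Tr A : Type} (C : K → NetComponent P Tr A)
    (D : NetComponent P Tr A) : Prop where
  places_eq : D.net.places = ⋃ k, (C k).net.places
  trans_eq : D.net.trans = ⋃ k, (C k).net.trans
  pre_eq : ∀ k, ∀ t ∈ (C k).net.trans, ∀ p, D.net.pre t p = (C k).net.pre t p
  post_eq : ∀ k, ∀ t ∈ (C k).net.trans, ∀ p, D.net.post t p = (C k).net.post t p
  M0_eq : ∀ p, D.net.M0 p = finsum fun k => (C k).net.M0 p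
  l_eq : ∀ k, ∀ t ∈ (C k).net.trans, D.net.l t = (C k).net.l t
  I_eq : D.I = ⋃ k, (C k).I
  O_eq : D.O = (⋃ k, (C k).O) \ ⋃ k, (C k).I

/-- An LSGA net: an asynchronous parallel composition of sequential components
with interface. -/
def IsLSGA {P Tr A : Type} (N : PNet P Tr A) : Prop :=
  ∃ (K : Type) (C : K → NetComponent P Tr A) (D : NetComponent P Tr A),
    Composable C ∧ (∀ k, (C k).Sequential) ∧ IsParComp C D ∧ D.net = N
namespace DistLSGA

variable {P Tr A Loc : Type}

noncomputable def qpre (N : PNet P Tr A) (D : P ⊕ Tr → Loc) (t : Tr) : (P ⊕ Loc) → ℕ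
  | Sum.inl p => N.pre t p
  | Sum.inr k => if D (Sum.inr t) = k ∧ t ∈ N.trans then 1 else 0

noncomputable def qpost (N : PNet P Tr A) (D : P ⊕ Tr → Loc) (t : Tr) : (P ⊕ Loc) → ℕ
  | Sum.inl p => N.post t p
  | Sum.inr k => if D (Sum.inr t) = k ∧ t ∈ N.trans then 1 else 0

/-- The LSGA net associated to a distributed net: add, for each location `k`, a fresh
place `Sum.inr k` carrying one token, with a self-loop on every transition located
at `k`. -/
noncomputable def qnet (N : PNet P Tr A) (D : P ⊕ Tr → Loc) : PNet (P ⊕ Loc) Tr A where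
  places := (Sum.inl '' N.places) ∪ Set.range Sum.inr
  trans := N.trans
  pre := qpre N D
  post := qpost N D
  M0 := fun x => match x with | Sum.inl p => N.M0 p | Sum.inr _ => 1
  l := N.l
  pre_wf := by
    intro t x hx
    cases x with
    | inl p => exact ⟨(N.pre_wf t p hx).1, Or.inl ⟨p, (N.pre_wf t p hx).2, rfl⟩⟩
    | inr k =>
      by_cases hc : D (Sum.inr t) = k ∧ t ∈ N.trans
      · exact ⟨hc.2, Or.inr ⟨k, rfl⟩⟩
      · simp [qpre, hc] at hx
  post_wf := by
    intro t x hx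
    cases x with
    | inl p => exact ⟨(N.post_wf t p hx).1, Or.inl ⟨p, (N.post_wf t p hx).2, rfl⟩⟩
    | inr k =>
      by_cases hc : D (Sum.inr t) = k ∧ t ∈ N.trans
      · exact ⟨hc.2, Or.inr ⟨k, rfl⟩⟩
      · simp [qpost, hc] at hx
  M0_wf := by
    intro x hx
    cases x with
    | inl p => exact Or.inl ⟨p, N.M0_wf p hx, rfl⟩
    | inr k => exact Or.inr ⟨k, rfl⟩

def Ik (N : PNet P Tr A) (D : P ⊕ Tr → Loc) (k : Loc) : Set (P ⊕ Loc) :=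
  {x | ∃ p, p ∈ N.places ∧ x = Sum.inl p ∧ D (Sum.inl p) = k}

def Ok (N : PNet P Tr A) (D : P ⊕ Tr → Loc) (k : Loc) : Set (P ⊕ Loc) :=
  {x | ∃ p, p ∈ N.places ∧ x = Sum.inl p ∧ D (Sum.inl p) ≠ k ∧
    ∃ t, t ∈ N.trans ∧ D (Sum.inr t) = k ∧ N.post t p ≠ 0}

noncomputable def cnet (N : PNet P Tr A) (D : P ⊕ Tr → Loc)
    (hD1 : ∀ t p, N.pre t p ≠ 0 → D (Sum.inr t) = D (Sum.inl p)) (k : Loc) :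
    PNet (P ⊕ Loc) Tr A where
  places := Ik N D k ∪ Ok N D k ∪ {Sum.inr k}
  trans := {t | t ∈ N.trans ∧ D (Sum.inr t) = k}
  pre := fun t x => if D (Sum.inr t) = k then qpre N D t x else 0
  post := fun t x => if D (Sum.inr t) = k then qpost N D t x else 0
  M0 := fun x => match x with
    | Sum.inl p => if D (Sum.inl p) = k then N.M0 p else 0
    | Sum.inr l => if l = k then 1 else 0
  l := N.l
  pre_wf := by
    intro t x hx
    by_cases ht : D (Sum.inr t) = k
    · rw [if_pos ht] at hx
      cases x with
      | inl p =>
        refine ⟨⟨(N.pre_wf t p hx).1, ht⟩, Or.inl (Or.inl ⟨p, (N.pre_wf t p hx).2, rfl, ?_⟩)⟩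
        rw [← hD1 t p hx, ht]
      | inr l =>
        by_cases hc : D (Sum.inr t) = l ∧ t ∈ N.trans
        · have : l = k := hc.1.symm.trans ht
          subst this
          exact ⟨⟨hc.2, ht⟩, Or.inr rfl⟩
        · simp [qpre, hc] at hx
    · rw [if_neg ht] at hx; exact absurd rfl hx
  post_wf := by
    intro t x hx
    by_cases ht : D (Sum.inr t) = k
    · rw [if_pos ht] at hx
      cases x with
      | inl p =>
        have h1 := N.post_wf t p hx
        refine ⟨⟨h1.1, ht⟩, ?_⟩
        by_cases hp : D (Sum.inl p) = k
        · exact Or.inl (Or.inl ⟨p, h1.2, rfl, hp⟩)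
        · exact Or.inl (Or.inr ⟨p, h1.2, rfl, hp, t, h1.1, ht, hx⟩)
      | inr l =>
        by_cases hc : D (Sum.inr t) = l ∧ t ∈ N.trans
        · have : l = k := hc.1.symm.trans ht
          subst this
          exact ⟨⟨hc.2, ht⟩, Or.inr rfl⟩
        · simp [qpost, hc] at hx
    · rw [if_neg ht] at hx; exact absurd rfl hx
  M0_wf := by
    intro x hx
    cases x with
    | inl p =>
      dsimp only at hx
      by_cases hp : D (Sum.inl p) = k
      · rw [if_pos hp] at hx
        exact Or.inl (Or.inl ⟨p, N.M0_wf p hx, rfl, hp⟩)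
      · rw [if_neg hp] at hx; exact absurd rfl hx
    | inr l =>
      dsimp only at hx
      by_cases hl : l = k
      · subst hl; exact Or.inr rfl
      · rw [if_neg hl] at hx; exact absurd rfl hx

noncomputable def comp (N : PNet P Tr A) (D : P ⊕ Tr → Loc)
    (hD1 : ∀ t p, N.pre t p ≠ 0 → D (Sum.inr t) = D (Sum.inl p)) (k : Loc) :
    NetComponent (P ⊕ Loc) Tr A where
  net := cnet N D hD1 k
  I := Ik N D k
  O := Ok N D k
  I_sub := fun x hx => Or.inl (Or.inl hx)
  O_sub := fun x hx => Or.inl (Or.inr hx)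
  disjIO := by
    rw [Set.disjoint_left]
    rintro x ⟨p, hp, rfl, hk⟩ ⟨p', hp', heq, hk', _⟩
    injection heq with h
    subst h
    exact hk' hk
  O_noPost := by
    rintro x ⟨p, hp, rfl, hk, _⟩ t
    show (if D (Sum.inr t) = k then qpre N D t (Sum.inl p) else 0) = 0
    by_cases ht : D (Sum.inr t) = k
    · rw [if_pos ht]
      show N.pre t p = 0
      by_contra hne
      exact hk (by rw [← hD1 t p hne, ht])
    · rw [if_neg ht]

theorem comp_sequential (N : PNet P Tr A) (D : P ⊕ Tr → Loc)
    (hD1 : ∀ t p, N.pre t p ≠ 0 → D (Sum.inr t) = D (Sum.inl p)) (k : Loc) :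
    (comp N D hD1 k).Sequential := by
  refine ⟨{Sum.inr k}, ?_, ?_, ?_⟩
  · rintro x rfl
    exact ⟨Or.inr rfl, by rintro (⟨p, _, h, _⟩ | ⟨p, _, h, _⟩) <;> cases h⟩
  · rintro t ⟨ht, hk⟩
    constructor
    · refine ⟨Sum.inr k, rfl, ?_, ?_⟩
      · show (if D (Sum.inr t) = k then qpre N D t (Sum.inr k) else 0) = 1
        rw [if_pos hk]
        show (if D (Sum.inr t) = k ∧ t ∈ N.trans then 1 else 0) = 1
        rw [if_pos ⟨hk, ht⟩]
      · rintro q' rfl hne; exact absurd rfl hne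
    · refine ⟨Sum.inr k, rfl, ?_, ?_⟩
      · show (if D (Sum.inr t) = k then qpost N D t (Sum.inr k) else 0) = 1
        rw [if_pos hk]
        show (if D (Sum.inr t) = k ∧ t ∈ N.trans then 1 else 0) = 1
        rw [if_pos ⟨hk, ht⟩]
      · rintro q' rfl hne; exact absurd rfl hne
  · refine ⟨Sum.inr k, rfl, if_pos rfl, ?_⟩
    rintro q' rfl hne; exact absurd rfl hne

end DistLSGA
namespace DistLSGA

variable {P Tr A Loc : Type}

noncomputable def bigComp (N : PNet P Tr A) (D : P ⊕ Tr → Loc)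
    (hD1 : ∀ t p, N.pre t p ≠ 0 → D (Sum.inr t) = D (Sum.inl p)) :
    NetComponent (P ⊕ Loc) Tr A where
  net := qnet N D
  I := ⋃ k, (comp N D hD1 k).I
  O := (⋃ k, (comp N D hD1 k).O) \ ⋃ k, (comp N D hD1 k).I
  I_sub := by
    rintro x hx
    obtain ⟨_, ⟨k, rfl⟩, p, hp, rfl, _⟩ := hx
    exact Or.inl ⟨p, hp, rfl⟩
  O_sub := by
    rintro x ⟨hx, -⟩
    obtain ⟨_, ⟨k, rfl⟩, p, hp, rfl, _⟩ := hx
    exact Or.inl ⟨p, hp, rfl⟩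
  disjIO := disjoint_sdiff_self_right
  O_noPost := by
    rintro x ⟨hx, hxn⟩ t
    obtain ⟨_, ⟨k, rfl⟩, p, hp, rfl, _⟩ := hx
    refine absurd (Set.mem_iUnion.mpr ⟨D (Sum.inl p), ?_⟩) hxn
    exact ⟨p, hp, rfl, rfl⟩

theorem composable_comp (N : PNet P Tr A) (D : P ⊕ Tr → Loc)
    (hD1 : ∀ t p, N.pre t p ≠ 0 → D (Sum.inr t) = D (Sum.inl p)) :
    Composable (comp N D hD1) := by
  refine ⟨?_, ?_, ?_⟩
  · intro k l hkl
    rw [Set.disjoint_left]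
    rintro t ⟨_, hk⟩ ⟨_, hl⟩
    exact hkl (hk.symm.trans hl)
  · intro k l hkl
    ext x
    constructor
    · rintro ⟨hk, hl⟩
      rcases hk with (hk | hk) | hk
      · rcases hl with (hl | hl) | hl
        · exact ⟨Or.inl hk, Or.inl hl⟩
        · exact ⟨Or.inl hk, Or.inr hl⟩
        · obtain ⟨p, _, rfl, _⟩ := hk
          exact absurd hl (by simp)
      · rcases hl with (hl | hl) | hl
        · exact ⟨Or.inr hk, Or.inl hl⟩
        · exact ⟨Or.inr hk, Or.inr hl⟩
        · obtain ⟨p, _, rfl, _⟩ := hk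
          exact absurd hl (by simp)
      · rcases hl with (hl | hl) | hl
        · obtain ⟨p, _, rfl, _⟩ := hl
          exact absurd hk (by simp)
        · obtain ⟨p, _, rfl, _⟩ := hl
          exact absurd hk (by simp)
        · have h1 : x = Sum.inr k := hk
          have h2 : x = Sum.inr l := hl
          exact absurd (Sum.inr.inj (h1.symm.trans h2)) hkl
    · rintro ⟨hk, hl⟩
      exact ⟨Or.inl hk, Or.inl hl⟩
  · intro k l hkl
    rw [Set.disjoint_left]
    rintro x ⟨p, hp, rfl, hk⟩ ⟨p', hp', heq, hl⟩
    injection heq with h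
    subst h
    exact hkl (hk.symm.trans hl)

theorem isParComp_comp (N : PNet P Tr A) (D : P ⊕ Tr → Loc)
    (hD1 : ∀ t p, N.pre t p ≠ 0 → D (Sum.inr t) = D (Sum.inl p)) :
    IsParComp (comp N D hD1) (bigComp N D hD1) := by
  constructor
  · ext x
    constructor
    · rintro (⟨p, hp, rfl⟩ | ⟨k, rfl⟩)
      · exact Set.mem_iUnion.mpr ⟨D (Sum.inl p), Or.inl (Or.inl ⟨p, hp, rfl, rfl⟩)⟩
      · exact Set.mem_iUnion.mpr ⟨k, Or.inr rfl⟩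
    · intro hx
      obtain ⟨_, ⟨k, rfl⟩, hk⟩ := hx
      rcases hk with (⟨p, hp, rfl, _⟩ | ⟨p, hp, rfl, _⟩) | hk
      · exact Or.inl ⟨p, hp, rfl⟩
      · exact Or.inl ⟨p, hp, rfl⟩
      · cases hk; exact Or.inr ⟨k, rfl⟩
  · ext t
    constructor
    · intro ht
      exact Set.mem_iUnion.mpr ⟨D (Sum.inr t), ht, rfl⟩
    · intro ht
      obtain ⟨_, ⟨k, rfl⟩, ht, _⟩ := ht
      exact ht
  · rintro k t ⟨ht, hk⟩ p
    exact (if_pos hk).symm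
  · rintro k t ⟨ht, hk⟩ p
    exact (if_pos hk).symm
  · intro x
    cases x with
    | inl p =>
      have : ∀ l, l ≠ D (Sum.inl p) → (comp N D hD1 l).net.M0 (Sum.inl p) = 0 := by
        intro l hl
        show (if D (Sum.inl p) = l then N.M0 p else 0) = 0
        rw [if_neg (fun hc => hl hc.symm)]
      rw [finsum_eq_single _ (D (Sum.inl p)) this]
      show N.M0 p = if D (Sum.inl p) = D (Sum.inl p) then N.M0 p else 0
      rw [if_pos rfl]
    | inr l =>
      have : ∀ k, k ≠ l → (comp N D hD1 k).net.M0 (Sum.inr l) = 0 := by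
        intro k hk
        show (if l = k then 1 else 0) = 0
        rw [if_neg (fun hc => hk hc.symm)]
      rw [finsum_eq_single _ l this]
      show 1 = if l = l then 1 else 0
      rw [if_pos rfl]
  · rintro k t ⟨ht, hk⟩
    rfl
  · rfl
  · rfl

theorem qnet_isLSGA (N : PNet P Tr A) (D : P ⊕ Tr → Loc)
    (hD1 : ∀ t p, N.pre t p ≠ 0 → D (Sum.inr t) = D (Sum.inl p)) :
    IsLSGA (qnet N D) :=
  ⟨Loc, comp N D hD1, bigComp N D hD1, composable_comp N D hD1,
    comp_sequential N D hD1, isParComp_comp N D hD1, rfl⟩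

end DistLSGA
namespace DistLSGA

variable {P Tr A Loc : Type}

def proj (s : ((P ⊕ Loc) → ℕ) × List Tr) : (P → ℕ) × List Tr :=
  (fun p => s.1 (Sum.inl p), s.2)

def preList (N : PNet P Tr A) (U : List Tr) (p : P) : ℕ :=
  (U.map fun t => N.pre t p).sum

theorem preList_nil (N : PNet P Tr A) (p : P) : preList N [] p = 0 := rfl

theorem preList_append (N : PNet P Tr A) (U V : List Tr) (p : P) :
    preList N (U ++ V) p = preList N U p + preList N V p := by
  simp [preList]

theorem preList_cons (N : PNet P Tr A) (t : Tr) (U : List Tr) (p : P) :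
    preList N (t :: U) p = N.pre t p + preList N U p := by
  simp [preList]

theorem preList_mem (N : PNet P Tr A) (u : Tr) (U : List Tr) (p : P) (h : u ∈ U) :
    N.pre u p ≤ preList N U p := by
  induction U with
  | nil => cases h
  | cons a l ih =>
    rw [preList_cons]
    rcases List.mem_cons.mp h with rfl | h
    · exact Nat.le_add_right _ _
    · exact le_trans (ih h) (Nat.le_add_left _ _)

theorem list_decomp {U : List Tr} {n : ℕ} {t : Tr} (h : U[n]? = some t) :
    U = U.take n ++ t :: U.drop (n + 1) := by
  have hn : n < U.length := (List.getElem?_eq_some_iff.mp h).1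
  conv_lhs => rw [← List.take_append_drop n U]
  rw [List.drop_eq_getElem_cons hn, (List.getElem?_eq_some_iff.mp h).2]

theorem mem_of_getElem? {U : List Tr} {n : ℕ} {t : Tr} (h : U[n]? = some t) : t ∈ U := by
  rw [list_decomp h]
  exact List.mem_append_right _ List.mem_cons_self

theorem preList_erase (N : PNet P Tr A) {U : List Tr} {n : ℕ} {t : Tr}
    (h : U[n]? = some t) (p : P) :
    preList N U p = N.pre t p + preList N (U.eraseIdx n) p := by
  rw [List.eraseIdx_eq_take_drop_succ, preList_append]
  conv_lhs => rw [list_decomp h]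
  rw [preList_append, preList_cons]
  omega

theorem mem_eraseIdx_of_ne {U : List Tr} {n : ℕ} {t u : Tr} (h : U[n]? = some t)
    (hu : u ∈ U) (hne : u ≠ t) : u ∈ U.eraseIdx n := by
  rw [List.eraseIdx_eq_take_drop_succ]
  rw [list_decomp h] at hu
  rcases List.mem_append.mp hu with h1 | h1
  · exact List.mem_append_left _ h1
  · rcases List.mem_cons.mp h1 with rfl | h1
    · exact absurd rfl hne
    · exact List.mem_append_right _ h1

theorem reach_fire (N : PNet P Tr A) {M : P → ℕ} (hM : N.Reachable M) {t : Tr}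
    (ht : t ∈ N.trans) (hen : ∀ p, N.pre t p ≤ M p) {M' : P → ℕ}
    (hM' : ∀ p, M' p = M p - N.pre t p + N.post t p) : N.Reachable M' := by
  have hpre : ∀ p, N.preStep (Finsupp.single t 1) p = N.pre t p := by
    intro p
    show (Finsupp.single t 1).sum (fun u n => n * N.pre u p) = _
    rw [Finsupp.sum_single_index (by rw [zero_mul]), one_mul]
  have hpost : ∀ p, N.postStep (Finsupp.single t 1) p = N.post t p := by
    intro p
    show (Finsupp.single t 1).sum (fun u n => n * N.post u p) = _
    rw [Finsupp.sum_single_index (by rw [zero_mul]), one_mul]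
  refine hM.step (G := Finsupp.single t 1) ⟨by simp, ?_, ?_, ?_⟩
  · intro u hu
    rw [Finset.mem_coe, Finsupp.support_single_ne_zero t one_ne_zero,
      Finset.mem_singleton] at hu
    subst hu; exact ht
  · intro p; rw [hpre]; exact hen p
  · intro p; rw [hpre, hpost]; exact hM' p

/-- The invariant on ST-markings of the LSGA net `qnet N D`. -/
def Good (N : PNet P Tr A) (D : P ⊕ Tr → Loc) (s : ((P ⊕ Loc) → ℕ) × List Tr) : Prop :=
  (∀ u ∈ s.2, u ∈ N.trans) ∧
    N.Reachable (fun p => s.1 (Sum.inl p) + preList N s.2 p) ∧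
    ∀ k, s.1 (Sum.inr k) = if ∃ u ∈ s.2, D (Sum.inr u) = k then 0 else 1

theorem noConc (N : PNet P Tr A) (D : P ⊕ Tr → Loc) (hD : N.DistributedWrt D)
    {s : ((P ⊕ Loc) → ℕ) × List Tr} (hG : Good N D s) {t u : Tr}
    (ht : t ∈ N.trans) (hen : ∀ p, N.pre t p ≤ s.1 (Sum.inl p)) (hu : u ∈ s.2) :
    D (Sum.inr t) ≠ D (Sum.inr u) := by
  apply hD.2
  exact ⟨ht, hG.1 u hu, _, hG.2.1,
    fun p => add_le_add (hen p) (preList_mem N u s.2 p hu)⟩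

theorem noConcErase (N : PNet P Tr A) (D : P ⊕ Tr → Loc) (hD : N.DistributedWrt D)
    {s : ((P ⊕ Loc) → ℕ) × List Tr} (hG : Good N D s) {n : ℕ} {t u : Tr}
    (hn : s.2[n]? = some t) (hu : u ∈ s.2.eraseIdx n) :
    D (Sum.inr t) ≠ D (Sum.inr u) := by
  apply hD.2
  refine ⟨hG.1 t (mem_of_getElem? hn), hG.1 u (List.mem_of_mem_eraseIdx hu), _,
    hG.2.1, fun p => ?_⟩
  have h1 := preList_erase N hn p
  have h2 := preList_mem N u _ p hu
  omega

end DistLSGA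
namespace DistLSGA

variable {P Tr A Loc : Type}

theorem down (N : PNet P Tr A) (D : P ⊕ Tr → Loc) (hD : N.DistributedWrt D)
    {s1 s1' : ((P ⊕ Loc) → ℕ) × List Tr} {η : Option (STLabel A)} (hG : Good N D s1)
    (h : (qnet N D).stTr s1 η s1') :
    N.stTr (proj s1) η (proj s1') ∧ Good N D s1' := by
  match η with
  | some (STLabel.plus a) =>
    obtain ⟨t, hl, hen, hM, hU⟩ := h
    have ht : t ∈ N.trans := hen.1
    have hp : ∀ x, (qnet N D).pre t x ≤ s1.1 x := hen.2
    have hb : ∀ p, (qnet N D).pre t (Sum.inl p) = N.pre t p := fun _ => rfl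
    constructor
    · refine ⟨t, hl, ⟨ht, fun p => ?_⟩, fun p => ?_, hU⟩
      · have := hp (Sum.inl p); rwa [hb p] at this
      · have := hM (Sum.inl p); rwa [hb p] at this
    refine ⟨?_, ?_, ?_⟩
    · intro u hu
      rw [hU] at hu
      rcases List.mem_append.mp hu with h1 | h1
      · exact hG.1 u h1
      · rw [List.mem_singleton.mp h1]; exact ht
    · have key : (fun p => s1'.1 (Sum.inl p) + preList N s1'.2 p) =
          (fun p => s1.1 (Sum.inl p) + preList N s1.2 p) := by
        funext p
        have h1 := hM (Sum.inl p)
        have h2 : preList N s1'.2 p = preList N s1.2 p + N.pre t p := by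
          rw [hU, preList_append, preList_cons, preList_nil]
          omega
        have h3 := hb p
        have h4 := hp (Sum.inl p)
        omega
      rw [key]; exact hG.2.1
    · intro k
      have h1 := hM (Sum.inr k)
      have h2 := hG.2.2 k
      have h4 := hp (Sum.inr k)
      by_cases hk : D (Sum.inr t) = k
      · have hq : (qnet N D).pre t (Sum.inr k) = 1 := if_pos ⟨hk, ht⟩
        have hc : ¬ ∃ u ∈ s1.2, D (Sum.inr u) = k := by
          intro hc; rw [if_pos hc] at h2; omega
        have hc' : ∃ u ∈ s1'.2, D (Sum.inr u) = k := by
          refine ⟨t, ?_, hk⟩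
          rw [hU]; exact List.mem_append_right _ (List.mem_singleton_self t)
        rw [if_pos hc']
        rw [if_neg hc] at h2
        omega
      · have hq : (qnet N D).pre t (Sum.inr k) = 0 := if_neg (fun hc => hk hc.1)
        have hcond : (∃ u ∈ s1'.2, D (Sum.inr u) = k) ↔ ∃ u ∈ s1.2, D (Sum.inr u) = k := by
          rw [hU]
          constructor
          · rintro ⟨u, hu, hk'⟩
            rcases List.mem_append.mp hu with h5 | h5
            · exact ⟨u, h5, hk'⟩
            · rw [List.mem_singleton.mp h5] at hk'; exact absurd hk' hk
          · rintro ⟨u, hu, hk'⟩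
            exact ⟨u, List.mem_append_left _ hu, hk'⟩
        rw [if_congr hcond rfl rfl, ← h2]
        omega
  | some (STLabel.minus a n) =>
    obtain ⟨t, hn, hl, hU, hM⟩ := h
    have ht : t ∈ N.trans := hG.1 t (mem_of_getElem? hn)
    have hb : ∀ p, (qnet N D).post t (Sum.inl p) = N.post t p := fun _ => rfl
    constructor
    · refine ⟨t, hn, hl, hU, fun p => ?_⟩
      have := hM (Sum.inl p); rwa [hb p] at this
    refine ⟨?_, ?_, ?_⟩
    · intro u hu
      rw [hU] at hu
      exact hG.1 u (List.mem_of_mem_eraseIdx hu)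
    · refine reach_fire N hG.2.1 ht (fun p => ?_) (fun p => ?_)
      · have h2 := preList_erase N hn p
        omega
      · have h1 := hM (Sum.inl p)
        have h2 := preList_erase N hn p
        have h3 := hb p
        rw [hU]
        omega
    · intro k
      have h1 := hM (Sum.inr k)
      have h2 := hG.2.2 k
      by_cases hk : D (Sum.inr t) = k
      · have hq : (qnet N D).post t (Sum.inr k) = 1 := if_pos ⟨hk, ht⟩
        have hc : ∃ u ∈ s1.2, D (Sum.inr u) = k := ⟨t, mem_of_getElem? hn, hk⟩
        have hc' : ¬ ∃ u ∈ s1'.2, D (Sum.inr u) = k := by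
          rintro ⟨u, hu, hk'⟩
          rw [hU] at hu
          exact noConcErase N D hD hG hn hu (hk.trans hk'.symm)
        rw [if_neg hc']
        rw [if_pos hc] at h2
        omega
      · have hq : (qnet N D).post t (Sum.inr k) = 0 := if_neg (fun hc => hk hc.1)
        have hcond : (∃ u ∈ s1'.2, D (Sum.inr u) = k) ↔ ∃ u ∈ s1.2, D (Sum.inr u) = k := by
          rw [hU]
          constructor
          · rintro ⟨u, hu, hk'⟩
            exact ⟨u, List.mem_of_mem_eraseIdx hu, hk'⟩
          · rintro ⟨u, hu, hk'⟩
            refine ⟨u, mem_eraseIdx_of_ne hn hu ?_, hk'⟩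
            rintro rfl; exact hk hk'
        rw [if_congr hcond rfl rfl, ← h2]
        omega
  | none =>
    obtain ⟨t, hl, hf, hU⟩ := h
    have ht : t ∈ N.trans := hf.1.1
    have hp : ∀ x, (qnet N D).pre t x ≤ s1.1 x := hf.1.2
    have hM : ∀ x, s1'.1 x = s1.1 x - (qnet N D).pre t x + (qnet N D).post t x := hf.2
    have hb : ∀ p, (qnet N D).pre t (Sum.inl p) = N.pre t p := fun _ => rfl
    have hb' : ∀ p, (qnet N D).post t (Sum.inl p) = N.post t p := fun _ => rfl
    constructor
    · refine ⟨t, hl, ⟨⟨ht, fun p => ?_⟩, fun p => ?_⟩, hU⟩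
      · have := hp (Sum.inl p); rwa [hb p] at this
      · have := hM (Sum.inl p); rwa [hb p, hb' p] at this
    refine ⟨?_, ?_, ?_⟩
    · intro u hu; rw [hU] at hu; exact hG.1 u hu
    · refine reach_fire N hG.2.1 ht (fun p => ?_) (fun p => ?_)
      · have h5 := hp (Sum.inl p)
        have h3 := hb p
        omega
      · have h1 := hM (Sum.inl p)
        have h3 := hb p
        have h4 := hb' p
        have h5 := hp (Sum.inl p)
        rw [hU]
        omega
    · intro k
      have h1 := hM (Sum.inr k)
      have h2 := hG.2.2 k
      have h5 := hp (Sum.inr k)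
      have hcond : (∃ u ∈ s1'.2, D (Sum.inr u) = k) ↔ ∃ u ∈ s1.2, D (Sum.inr u) = k := by
        rw [hU]
      rw [if_congr hcond rfl rfl, ← h2]
      by_cases hk : D (Sum.inr t) = k
      · have hq : (qnet N D).pre t (Sum.inr k) = 1 := if_pos ⟨hk, ht⟩
        have hq' : (qnet N D).post t (Sum.inr k) = 1 := if_pos ⟨hk, ht⟩
        omega
      · have hq : (qnet N D).pre t (Sum.inr k) = 0 := if_neg (fun hc => hk hc.1)
        have hq' : (qnet N D).post t (Sum.inr k) = 0 := if_neg (fun hc => hk hc.1)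
        omega

theorem up (N : PNet P Tr A) (D : P ⊕ Tr → Loc) (hD : N.DistributedWrt D)
    {s1 : ((P ⊕ Loc) → ℕ) × List Tr} {s2' : (P → ℕ) × List Tr}
    {η : Option (STLabel A)} (hG : Good N D s1)
    (h : N.stTr (proj s1) η s2') :
    ∃ s1', (qnet N D).stTr s1 η s1' ∧ proj s1' = s2' ∧ Good N D s1' := by
  match η with
  | some (STLabel.plus a) =>
    obtain ⟨t, hl, hen, hM2, hU2⟩ := h
    have ht : t ∈ N.trans := hen.1
    have hp : ∀ p, N.pre t p ≤ s1.1 (Sum.inl p) := hen.2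
    have hstep : (qnet N D).stTr s1 (some (STLabel.plus a))
        (fun x => s1.1 x - (qnet N D).pre t x, s1.2 ++ [t]) := by
      refine ⟨t, hl, ⟨ht, ?_⟩, fun x => rfl, rfl⟩
      intro x
      cases x with
      | inl p => exact hp p
      | inr k =>
        by_cases hk : D (Sum.inr t) = k
        · have hq : (qnet N D).pre t (Sum.inr k) = 1 := if_pos ⟨hk, ht⟩
          rw [hq, hG.2.2 k, if_neg]
          rintro ⟨u, hu, hk'⟩
          exact noConc N D hD hG ht hp hu (hk.trans hk'.symm)
        · have hq : (qnet N D).pre t (Sum.inr k) = 0 := if_neg (fun hc => hk hc.1)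
          rw [hq]; exact Nat.zero_le _
    refine ⟨_, hstep, ?_, (down N D hD hG hstep).2⟩
    apply Prod.ext
    · funext p; exact (hM2 p).symm
    · exact hU2.symm
  | some (STLabel.minus a n) =>
    obtain ⟨t, hn, hl, hU2, hM2⟩ := h
    have hstep : (qnet N D).stTr s1 (some (STLabel.minus a n))
        (fun x => s1.1 x + (qnet N D).post t x, s1.2.eraseIdx n) := by
      exact ⟨t, hn, hl, rfl, fun x => rfl⟩
    refine ⟨_, hstep, ?_, (down N D hD hG hstep).2⟩
    apply Prod.ext
    · funext p; exact (hM2 p).symm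
    · exact hU2.symm
  | none =>
    obtain ⟨t, hl, hf, hU2⟩ := h
    have ht : t ∈ N.trans := hf.1.1
    have hp : ∀ p, N.pre t p ≤ s1.1 (Sum.inl p) := hf.1.2
    have hstep : (qnet N D).stTr s1 none
        (fun x => s1.1 x - (qnet N D).pre t x + (qnet N D).post t x, s1.2) := by
      refine ⟨t, hl, ⟨⟨ht, ?_⟩, fun x => rfl⟩, rfl⟩
      intro x
      cases x with
      | inl p => exact hp p
      | inr k =>
        by_cases hk : D (Sum.inr t) = k
        · have hq : (qnet N D).pre t (Sum.inr k) = 1 := if_pos ⟨hk, ht⟩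
          rw [hq, hG.2.2 k, if_neg]
          rintro ⟨u, hu, hk'⟩
          exact noConc N D hD hG ht hp hu (hk.trans hk'.symm)
        · have hq : (qnet N D).pre t (Sum.inr k) = 0 := if_neg (fun hc => hk hc.1)
          rw [hq]; exact Nat.zero_le _
    refine ⟨_, hstep, ?_, (down N D hD hG hstep).2⟩
    apply Prod.ext
    · funext p; exact (hf.2 p).symm
    · exact hU2.symm

end DistLSGA
namespace DistLSGA

theorem dc_lift {α β : Type} (T1 : α → α → Prop) (T2 : β → β → Prop) (G : α → Prop)
    (pr : α → β)
    (key : ∀ s y, G s → T2 (pr s) y → ∃ s', T1 s s' ∧ G s' ∧ pr s' = y)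
    (s : α) (hG : G s) (g : ℕ → β) (hg0 : g 0 = pr s) (hg : ∀ n, T2 (g n) (g (n + 1))) :
    ∃ f : ℕ → α, f 0 = s ∧ ∀ n, T1 (f n) (f (n + 1)) := by
  let F : ∀ n : ℕ, {a : α // G a ∧ pr a = g n} := fun n =>
    Nat.rec ⟨s, hG, hg0.symm⟩
      (fun m ih =>
        let h := key ih.1 (g (m + 1)) ih.2.1 (by rw [ih.2.2]; exact hg m)
        ⟨h.choose, h.choose_spec.2.1, h.choose_spec.2.2⟩) n
  refine ⟨fun n => (F n).1, rfl, fun n => ?_⟩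
  show T1 (F n).1 (F (n + 1)).1
  exact (key (F n).1 (g (n + 1)) (F n).2.1
    (by rw [(F n).2.2]; exact hg n)).choose_spec.1

end DistLSGA

theorem distributed_to_LSGA_aux {P Tr A : Type} (N : PNet P Tr A)
    (h : N.Distributed) :
    ∃ (P' Tr' : Type) (N' : PNet P' Tr' A),
      IsLSGA N' ∧ BranchingSTBisimilarED N' N := by
  obtain ⟨Loc, D, hD⟩ := h
  refine ⟨P ⊕ Loc, Tr, DistLSGA.qnet N D, DistLSGA.qnet_isLSGA N D hD.1, ?_⟩
  refine ⟨fun s1 s2 => s2 = DistLSGA.proj s1 ∧ DistLSGA.Good N D s1, ⟨?_, ?_, ?_⟩, ?_⟩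
  · refine ⟨rfl, ?_, ?_, ?_⟩
    · intro u hu; cases hu
    · have he : (fun p => (DistLSGA.qnet N D).M0 (Sum.inl p) +
          DistLSGA.preList N [] p) = N.M0 := by
        funext p
        show N.M0 p + 0 = N.M0 p
        omega
      show N.Reachable fun p => (DistLSGA.qnet N D).M0 (Sum.inl p) + DistLSGA.preList N [] p
      rw [he]
      exact PNet.Reachable.refl
    · intro k
      show 1 = if ∃ u ∈ ([] : List Tr), D (Sum.inr u) = k then 0 else 1
      rw [if_neg]
      rintro ⟨u, hu, -⟩
      cases hu
  · rintro s1 s2 η s1' ⟨rfl, hG⟩ hstep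
    obtain ⟨h1, hG'⟩ := DistLSGA.down N D hD hG hstep
    exact ⟨DistLSGA.proj s1, DistLSGA.proj s1', Relation.ReflTransGen.refl, Or.inl h1,
      ⟨rfl, hG⟩, ⟨rfl, hG'⟩⟩
  · rintro s1 s2 η s2' ⟨rfl, hG⟩ hstep
    obtain ⟨s1', h1, hproj, hG'⟩ := DistLSGA.up N D hD hG hstep
    exact ⟨s1, s1', Relation.ReflTransGen.refl, Or.inl h1, ⟨rfl, hG⟩, ⟨hproj.symm, hG'⟩⟩
  · rintro s1 s2 ⟨rfl, hG⟩
    constructor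
    · rintro ⟨f, hf0, hf⟩
      have hf' : ∀ n, (DistLSGA.qnet N D).stTr (f n) none (f (n + 1)) := hf
      have hGn : ∀ n, DistLSGA.Good N D (f n) := by
        intro n
        induction n with
        | zero => rw [hf0]; exact hG
        | succ m ih => exact (DistLSGA.down N D hD ih (hf' m)).2
      refine ⟨fun n => DistLSGA.proj (f n), ?_, fun n => (DistLSGA.down N D hD (hGn n) (hf' n)).1⟩
      show DistLSGA.proj (f 0) = DistLSGA.proj s1
      rw [hf0]
    · rintro ⟨g, hg0, hg⟩
      obtain ⟨f, hf0, hf⟩ := DistLSGA.dc_lift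
        (fun x y => (DistLSGA.qnet N D).stTr x none y)
        (fun x y => N.stTr x none y) (DistLSGA.Good N D) DistLSGA.proj
        (fun s y hGs hstep => by
          obtain ⟨s', a, b, c⟩ := DistLSGA.up N D hD hGs hstep
          exact ⟨s', a, c, b⟩)
        s1 hG g hg0 hg
      exact ⟨f, hf0, hf⟩

/-- for any distributed net `N` there is an LSGA net `N'` with
`N' ≈Δ_bSTb N`. -/
theorem distributed_to_LSGA {P Tr A : Type} (N : PNet P Tr A)
    (h : N.Distributed) :
    ∃ (P' Tr' : Type) (N' : PNet P' Tr' A),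
      IsLSGA N' ∧ BranchingSTBisimilarED N' N := by
  exact distributed_to_LSGA_aux N h
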